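/- Let X be a real normed space, Y a real normed space, π: X → Y a surjective linear map, ψ: Y → X a section of π, ŷ ∈ Y, x̂ = ψ(ŷ), and α ∈ (0,1]. Suppose λ₁, λ₂ > 0 and φ₁, φ₂: Y → X satisfy, for i = 1, 2: π(φᵢ(y)) = λᵢ·y for all y ∈ Y, and there is L̃ᵢ > 0 with ‖φᵢ(y) − λᵢψ(y)‖ ≤ L̃ᵢ·‖λᵢψ(ŷ) − λᵢψ(y)‖^α + ‖λᵢψ(ŷ) − λᵢψ(y)‖ for all y ∈ Y. Then the sum φ₁ + φ₂ satisfies π((φ₁+φ₂)(y)) = (λ₁+λ₂)·y for all y ∈ Y, and there is L̃ > 0 with ‖(φ₁+φ₂)(y) − (λ₁+λ₂)ψ(y)‖ ≤ L̃·‖(λ₁+λ₂)ψ(ŷ) − (λ₁+λ₂)ψ(y)‖^α + ‖(λ₁+λ₂)ψ(ŷ) − (λ₁+λ₂)ψ(y)‖ for all y ∈ Y. -/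

import Mathlib

/-- Theorem 2.8 (closure under addition): if `φ₁ ∈ H_{λ₁ψ, λ₁x̂, α}` and
`φ₂ ∈ H_{λ₂ψ, λ₂x̂, α}`, then `φ₁ + φ₂ ∈ H_{(λ₁+λ₂)ψ, (λ₁+λ₂)x̂, α}`. -/
theorem holder_set_add {X Y : Type*} [NormedAddCommGroup X] [NormedSpace ℝ X]
    [NormedAddCommGroup Y] [NormedSpace ℝ Y]
    (π : X →ₗ[ℝ] Y) (hsurj : Function.Surjective π)
    (ψ : Y → X) (hψ : ∀ y, π (ψ y) = y)
    (yh : Y) (xh : X) (hxh : xh = ψ yh)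
    (α : ℝ) (hα : α ∈ Set.Ioc (0 : ℝ) 1)
    (lam₁ lam₂ : ℝ) (hlam₁ : 0 < lam₁) (hlam₂ : 0 < lam₂)
    (φ₁ φ₂ : Y → X)
    (hφ₁sec : ∀ y, π (φ₁ y) = lam₁ • y)
    (hφ₂sec : ∀ y, π (φ₂ y) = lam₂ • y)
    (hφ₁ : ∃ L > (0 : ℝ), ∀ y : Y,
      ‖φ₁ y - lam₁ • ψ y‖ ≤ L * ‖lam₁ • ψ yh - lam₁ • ψ y‖ ^ α + ‖lam₁ • ψ yh - lam₁ • ψ y‖)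
    (hφ₂ : ∃ L > (0 : ℝ), ∀ y : Y,
      ‖φ₂ y - lam₂ • ψ y‖ ≤ L * ‖lam₂ • ψ yh - lam₂ • ψ y‖ ^ α + ‖lam₂ • ψ yh - lam₂ • ψ y‖) :
    (∀ y : Y, π (φ₁ y + φ₂ y) = (lam₁ + lam₂) • y) ∧
    ∃ L > (0 : ℝ), ∀ y : Y,
      ‖(φ₁ y + φ₂ y) - (lam₁ + lam₂) • ψ y‖ ≤
        L * ‖(lam₁ + lam₂) • ψ yh - (lam₁ + lam₂) • ψ y‖ ^ α
          + ‖(lam₁ + lam₂) • ψ yh - (lam₁ + lam₂) • ψ y‖ := by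
  obtain ⟨hα0, hα1⟩ := hα
  obtain ⟨L₁, hL₁, h₁⟩ := hφ₁
  obtain ⟨L₂, hL₂, h₂⟩ := hφ₂
  have hsum : (0:ℝ) < lam₁ + lam₂ := by linarith
  constructor
  · intro y
    rw [map_add, hφ₁sec, hφ₂sec, add_smul]
  · refine ⟨L₁ + L₂, by linarith, fun y => ?_⟩
    set d := ‖ψ yh - ψ y‖ with hd
    have hd0 : 0 ≤ d := norm_nonneg _
    have norm₁ : ‖lam₁ • ψ yh - lam₁ • ψ y‖ = lam₁ * d := by
      rw [← smul_sub, norm_smul, Real.norm_of_nonneg hlam₁.le]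
    have norm₂ : ‖lam₂ • ψ yh - lam₂ • ψ y‖ = lam₂ * d := by
      rw [← smul_sub, norm_smul, Real.norm_of_nonneg hlam₂.le]
    have norm₃ : ‖(lam₁ + lam₂) • ψ yh - (lam₁ + lam₂) • ψ y‖ = (lam₁ + lam₂) * d := by
      rw [← smul_sub, norm_smul, Real.norm_of_nonneg hsum.le]
    have key : ‖(φ₁ y + φ₂ y) - (lam₁ + lam₂) • ψ y‖ ≤
        ‖φ₁ y - lam₁ • ψ y‖ + ‖φ₂ y - lam₂ • ψ y‖ := by
      rw [add_smul]
      calc ‖(φ₁ y + φ₂ y) - (lam₁ • ψ y + lam₂ • ψ y)‖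
          = ‖(φ₁ y - lam₁ • ψ y) + (φ₂ y - lam₂ • ψ y)‖ := by congr 1; abel
        _ ≤ _ := norm_add_le _ _
    have pow₁ : (lam₁ * d) ^ α ≤ ((lam₁ + lam₂) * d) ^ α :=
      Real.rpow_le_rpow (by positivity) (by nlinarith) hα0.le
    have pow₂ : (lam₂ * d) ^ α ≤ ((lam₁ + lam₂) * d) ^ α :=
      Real.rpow_le_rpow (by positivity) (by nlinarith) hα0.le
    calc ‖(φ₁ y + φ₂ y) - (lam₁ + lam₂) • ψ y‖
        ≤ ‖φ₁ y - lam₁ • ψ y‖ + ‖φ₂ y - lam₂ • ψ y‖ := key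
      _ ≤ (L₁ * (lam₁ * d) ^ α + lam₁ * d) + (L₂ * (lam₂ * d) ^ α + lam₂ * d) := by
          have := h₁ y; have := h₂ y
          rw [norm₁] at *; rw [norm₂] at *
          linarith
      _ ≤ (L₁ + L₂) * ((lam₁ + lam₂) * d) ^ α + (lam₁ + lam₂) * d := by
          nlinarith [pow₁, pow₂, mul_le_mul_of_nonneg_left pow₁ hL₁.le,
            mul_le_mul_of_nonneg_left pow₂ hL₂.le]
      _ = _ := by rw [norm₃]
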